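/- Let 1 ≤ p < q ≤ n with gcd(p,q) = 1 and p/q ≤ 1/2. The chip configuration σ on K_n defined by σ(v) = v+p-1 for v ≤ q-1-p, σ(v) = v+n+p-q-1 for q-p ≤ v ≤ q-1, and σ(v) = n+p-1 for v ≥ q, has activity a(σ) = p/q. -/

import Mathlib

open Finset

/-- Number of unstable vertices of a chip configuration on `K n`. -/
def chipR (n : ℕ) (σ : Fin n → ℕ) : ℕ :=
  (Finset.univ.filter (fun v => n ≤ σ v)).card

/-- Parallel chip-firing update on the complete graph `K n`. -/
def chipU (n : ℕ) (σ : Fin n → ℕ) : Fin n → ℕ :=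
  fun v => if n ≤ σ v then σ v + chipR n σ - n else σ v + chipR n σ

/-- Total number of firings in the first `t` updates. -/
def chipAlpha (n : ℕ) (σ : Fin n → ℕ) (t : ℕ) : ℕ :=
  ∑ s ∈ Finset.range t, chipR n ((chipU n)^[s] σ)

/-- Number of times vertex `v` fires in the first `t` updates. -/
def odometer (n : ℕ) (σ : Fin n → ℕ) (t : ℕ) (v : Fin n) : ℕ :=
  ((Finset.range t).filter (fun s => n ≤ (chipU n)^[s] σ v)).card

/-- `a` is the activity of `σ`. -/
def Activity (n : ℕ) (σ : Fin n → ℕ) (a : ℝ) : Prop :=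
  Filter.Tendsto (fun t : ℕ => (chipAlpha n σ t : ℝ) / (n * t)) Filter.atTop (nhds a)

/-- A chip configuration is confined if all heights are at most `2n-1`
and the heights differ pairwise by at most `n-1`. -/
def Confined (n : ℕ) (σ : Fin n → ℕ) : Prop :=
  (∀ v, σ v ≤ 2 * n - 1) ∧ ∀ v w, σ v ≤ σ w + (n - 1)

/-- The eventual period: least `m ≥ 1` with `U^{t+m} σ = U^t σ` for all large `t`. -/
noncomputable def eventualPeriod (n : ℕ) (σ : Fin n → ℕ) : ℕ :=
  sInf {m | 1 ≤ m ∧ ∃ t₀, ∀ t ≥ t₀, (chipU n)^[t + m] σ = (chipU n)^[t] σ}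

/-- The transient length of the dynamics started at `σ`. -/
noncomputable def transientLength (n : ℕ) (σ : Fin n → ℕ) : ℕ :=
  sInf {t | ∃ t' > t, (chipU n)^[t'] σ = (chipU n)^[t] σ}


section Aux
variable {n p q : ℕ}

def cDV (p q t : ℕ) : ℕ := (q - p * t % q) % q

lemma cmod_resolve3 {n x : ℕ} (hn : 0 < n) (hx : x < 3 * n) :
    (x % n = x ∧ x < n) ∨ (x % n = x - n ∧ n ≤ x ∧ x < 2 * n) ∨
      (x % n = x - 2 * n ∧ 2 * n ≤ x) := by
  rcases lt_or_ge x n with h | h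
  · exact Or.inl ⟨Nat.mod_eq_of_lt h, h⟩
  rcases lt_or_ge x (2 * n) with h2 | h2
  · refine Or.inr (Or.inl ⟨?_, h, h2⟩)
    rw [Nat.mod_eq_sub_mod h, Nat.mod_eq_of_lt (by omega)]
  · refine Or.inr (Or.inr ⟨?_, h2⟩)
    rw [Nat.mod_eq_sub_mod h, Nat.mod_eq_sub_mod (by omega), Nat.mod_eq_of_lt (by omega)]
    omega

lemma cDV_lt (p : ℕ) (hq : 0 < q) (t : ℕ) : cDV p q t < q := Nat.mod_lt _ hq

lemma cDV_zero (p q : ℕ) : cDV p q 0 = 0 := by simp [cDV]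

lemma cDV_mod (p : ℕ) (hq : 0 < q) (t : ℕ) : (p * t + cDV p q t) % q = 0 := by
  unfold cDV
  have h1 : p * t % q < q := Nat.mod_lt _ hq
  have h2 : p * t % q ≤ p * t := Nat.mod_le _ _
  rcases Nat.eq_zero_or_pos (p * t % q) with h | h
  · rw [h]; simp [Nat.mod_self, Nat.add_mod, h]
  · have hd : (q - p * t % q) % q = q - p * t % q := Nat.mod_eq_of_lt (by omega)
    have e : p * t + (q - p * t % q) = q + (p * t - p * t % q) := by omega
    rw [hd, e, Nat.add_mod_left]
    exact Nat.sub_mod_eq_zero_of_mod_eq ((Nat.mod_mod_of_dvd _ dvd_rfl).symm)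

lemma cmod_resolve2 {n x : ℕ} (hn : 0 < n) (hx : x < 2 * n) :
    (x % n = x ∧ x < n) ∨ (x % n = x - n ∧ n ≤ x) := by
  rcases lt_or_ge x n with h | h
  · exact Or.inl ⟨Nat.mod_eq_of_lt h, h⟩
  · exact Or.inr ⟨by rw [Nat.mod_eq_sub_mod h, Nat.mod_eq_of_lt (by omega)], h⟩

lemma cDV_unique (hq : 0 < q) (t a : ℕ) (ha : a < q) (hmod : (p * t + a) % q = 0) :
    a = cDV p q t := by
  have h1 := cDV_mod p hq t
  have h2 := cDV_lt p hq t
  have hme : a ≡ cDV p q t [MOD q] := by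
    apply Nat.ModEq.add_left_cancel' (p * t)
    unfold Nat.ModEq
    rw [hmod, h1]
  rw [Nat.ModEq] at hme
  rwa [Nat.mod_eq_of_lt ha, Nat.mod_eq_of_lt h2] at hme

lemma cDV_step_big (hq : 0 < q) (hpq : p < q) {t : ℕ} (h : cDV p q t < p) :
    cDV p q (t + 1) = cDV p q t + (q - p) := by
  symm
  apply cDV_unique hq _ _ (by omega)
  have e : p * (t + 1) = p * t + p := by ring
  have e2 : p * (t + 1) + (cDV p q t + (q - p)) = p * t + cDV p q t + q := by omega
  rw [e2, Nat.add_mod_right]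
  exact cDV_mod p hq t

lemma cDV_step_small (hq : 0 < q) {t : ℕ} (h : p ≤ cDV p q t) :
    cDV p q (t + 1) = cDV p q t - p := by
  symm
  have hlt := cDV_lt p hq t
  apply cDV_unique hq _ _ (by omega)
  have e : p * (t + 1) = p * t + p := by ring
  have e2 : p * (t + 1) + (cDV p q t - p) = p * t + cDV p q t := by omega
  rw [e2]
  exact cDV_mod p hq t

lemma cDV_periodic (p : ℕ) (t : ℕ) : cDV p q (t + q) = cDV p q t := by
  unfold cDV
  rw [Nat.mul_add, Nat.add_mul_mod_self_right]

def cR (n p q t : ℕ) : ℕ := if cDV p q t < p then p + (n - q) else p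
def cB (n p q t : ℕ) : ℕ := ∑ s ∈ Finset.range t, cR n p q s
def cM (n p q : ℕ) : ℕ → ℕ
  | 0 => p
  | (t + 1) => cR n p q t
def cRep (n : ℕ) (σ : Fin n → ℕ) (m b : ℕ) : Fin n → ℕ :=
  fun v => (σ v + b + (n - m)) % n + m

lemma cB_succ (t : ℕ) : cB n p q (t + 1) = cB n p q t + cR n p q t :=
  Finset.sum_range_succ _ _

lemma cR_periodic (t : ℕ) : cR n p q (t + q) = cR n p q t := by
  unfold cR; rw [cDV_periodic]

lemma cB_dv_mod (hq : 0 < q) (hpq : p < q) (hqn : q ≤ n) (t : ℕ) :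
    (cB n p q t + cDV p q t) % n = 0 := by
  induction t with
  | zero => simp [cB, cDV_zero]
  | succ t ih =>
    rw [cB_succ]
    rcases lt_or_ge (cDV p q t) p with h | h
    · have hs := cDV_step_big hq (by omega) h
      have hr : cR n p q t = p + (n - q) := if_pos h
      have e : cB n p q t + cR n p q t + cDV p q (t + 1)
          = cB n p q t + cDV p q t + n := by
        rw [hs, hr]; omega
      rw [e, Nat.add_mod_right, ih]
    · have hs := cDV_step_small hq h
      have hr : cR n p q t = p := if_neg (by omega)
      have e : cB n p q t + cR n p q t + cDV p q (t + 1)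
          = cB n p q t + cDV p q t := by rw [hs, hr]; omega
      rw [e, ih]

lemma chipR_le (n : ℕ) (τ : Fin n → ℕ) : chipR n τ ≤ n := by
  unfold chipR
  calc (Finset.univ.filter (fun v => n ≤ τ v)).card ≤ Finset.univ.card :=
        Finset.card_filter_le _ _
    _ = n := by simp

lemma chipU_rep (hn : 0 < n) (σ : Fin n → ℕ) (m b : ℕ) (hm : m ≤ n) :
    chipU n (cRep n σ m b) =
      cRep n σ (chipR n (cRep n σ m b)) (b + chipR n (cRep n σ m b)) := by
  funext v
  simp only [chipU]
  set r := chipR n (cRep n σ m b) with hr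
  have hrn : r ≤ n := chipR_le _ _
  show (if n ≤ cRep n σ m b v then cRep n σ m b v + r - n else cRep n σ m b v + r)
      = cRep n σ r (b + r) v
  show (if n ≤ (σ v + b + (n - m)) % n + m then (σ v + b + (n - m)) % n + m + r - n
      else (σ v + b + (n - m)) % n + m + r) = (σ v + (b + r) + (n - r)) % n + r
  have ha' : (σ v + b + (n - m)) % n < n := Nat.mod_lt _ hn
  have key : (σ v + (b + r) + (n - r)) % n = ((σ v + b + (n - m)) % n + m) % n := by
    have e1 : σ v + (b + r) + (n - r) = σ v + b + (n - m) + m := by omega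
    rw [e1, Nat.mod_add_mod]
  rw [key]
  rcases cmod_resolve2 hn (show (σ v + b + (n - m)) % n + m < 2 * n by omega) with
    ⟨h3, h4⟩ | ⟨h3, h4⟩ <;> rw [h3] <;> split_ifs <;> omega

lemma chipR_rep (hn : 0 < n) (σ : Fin n → ℕ) (m b : ℕ) (hm : m ≤ n) :
    chipR n (cRep n σ m b) =
      (Finset.univ.filter (fun v => (σ v + b) % n < m)).card := by
  unfold chipR
  congr 1
  apply Finset.filter_congr
  intro v _
  simp only [cRep]
  set a := (σ v + b + (n - m)) % n with ha
  have ha' : a < n := Nat.mod_lt _ hn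
  have key : (σ v + b) % n = (a + m) % n := by
    have e2 : σ v + b + (n - m) + m = σ v + b + n := by omega
    rw [ha, Nat.mod_add_mod, e2, Nat.add_mod_right]
  rw [key]
  rcases cmod_resolve2 hn (show a + m < 2 * n by omega) with
    ⟨h3, h4⟩ | ⟨h3, h4⟩ <;> rw [h3] <;> omega

lemma card_fin_filter (n : ℕ) (P : ℕ → Prop) [DecidablePred P] :
    (Finset.univ.filter (fun v : Fin n => P (v : ℕ))).card
      = ((Finset.range n).filter P).card := by
  rw [Finset.card_filter, Finset.card_filter,
    Fin.sum_univ_eq_sum_range (fun j => if P j then 1 else 0)]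

lemma count_big (hn : 0 < n) (hp : 1 ≤ p) (hpq : p < q) (hqn : q ≤ n)
    (hhalf : 2 * p ≤ q) {σ : Fin n → ℕ}
    (hσ : ∀ v : Fin n,
      σ v = if (v : ℕ) + 1 ≤ q - 1 - p then (v : ℕ) + 1 + p - 1
            else if (v : ℕ) + 1 ≤ q - 1 then (v : ℕ) + 1 + n + p - q - 1
            else n + p - 1)
    {d : ℕ} (hd : d < p) :
    (Finset.univ.filter (fun v => (σ v + (n - d)) % n < p)).card = p + (n - q) := by
  have hiff : ∀ v : Fin n,
      ((σ v + (n - d)) % n < p) ↔ ¬ (d ≤ (v : ℕ) ∧ (v : ℕ) < d + (q - p)) := by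
    intro v
    have hv := v.isLt
    have hs := hσ v
    have hb : σ v + (n - d) < 3 * n := by split_ifs at hs <;> omega
    rcases cmod_resolve3 hn hb with ⟨h, h'⟩ | ⟨h, h', h''⟩ | ⟨h, h'⟩ <;>
      rw [h] <;> split_ifs at hs <;> omega
  rw [Finset.filter_congr (fun v _ => hiff v),
    card_fin_filter n (fun j => ¬ (d ≤ j ∧ j < d + (q - p)))]
  have hset : (Finset.range n).filter (fun j => ¬ (d ≤ j ∧ j < d + (q - p)))
      = Finset.range n \ Finset.Ico d (d + (q - p)) := by
    ext j
    simp only [Finset.mem_filter, Finset.mem_sdiff, Finset.mem_range, Finset.mem_Ico]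
  have hsub : Finset.Ico d (d + (q - p)) ⊆ Finset.range n := by
    intro j hj
    simp only [Finset.mem_Ico] at hj
    simp only [Finset.mem_range]
    omega
  rw [hset, Finset.card_sdiff_of_subset hsub, Nat.card_Ico, Finset.card_range]
  omega

lemma count_small_A (hn : 0 < n) (hp : 1 ≤ p) (hpq : p < q) (hqn : q ≤ n)
    (hhalf : 2 * p ≤ q) {σ : Fin n → ℕ}
    (hσ : ∀ v : Fin n,
      σ v = if (v : ℕ) + 1 ≤ q - 1 - p then (v : ℕ) + 1 + p - 1
            else if (v : ℕ) + 1 ≤ q - 1 then (v : ℕ) + 1 + n + p - q - 1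
            else n + p - 1)
    {d : ℕ} (hd1 : p ≤ d) (hd2 : d + p ≤ q - 1) :
    (Finset.univ.filter (fun v => (σ v + (n - d)) % n < p)).card = p := by
  have hiff : ∀ v : Fin n,
      ((σ v + (n - d)) % n < p) ↔ (d - p ≤ (v : ℕ) ∧ (v : ℕ) < d) := by
    intro v
    have hv := v.isLt
    have hs := hσ v
    have hb : σ v + (n - d) < 3 * n := by split_ifs at hs <;> omega
    rcases cmod_resolve3 hn hb with ⟨h, h'⟩ | ⟨h, h', h''⟩ | ⟨h, h'⟩ <;>
      rw [h] <;> split_ifs at hs <;> omega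
  rw [Finset.filter_congr (fun v _ => hiff v),
    card_fin_filter n (fun j => d - p ≤ j ∧ j < d)]
  have hset : (Finset.range n).filter (fun j => d - p ≤ j ∧ j < d)
      = Finset.Ico (d - p) d := by
    ext j
    simp only [Finset.mem_filter, Finset.mem_range, Finset.mem_Ico]
    omega
  rw [hset, Nat.card_Ico]
  omega

lemma count_small_B (hn : 0 < n) (hp : 1 ≤ p) (hpq : p < q) (hqn : q ≤ n)
    (hhalf : 2 * p ≤ q) {σ : Fin n → ℕ}
    (hσ : ∀ v : Fin n,
      σ v = if (v : ℕ) + 1 ≤ q - 1 - p then (v : ℕ) + 1 + p - 1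
            else if (v : ℕ) + 1 ≤ q - 1 then (v : ℕ) + 1 + n + p - q - 1
            else n + p - 1)
    {d : ℕ} (hd1 : q - p ≤ d) (hd2 : d < q) :
    (Finset.univ.filter (fun v => (σ v + (n - d)) % n < p + (n - q))).card = p := by
  have hiff : ∀ v : Fin n,
      ((σ v + (n - d)) % n < p + (n - q)) ↔ (d - p ≤ (v : ℕ) ∧ (v : ℕ) < d) := by
    intro v
    have hv := v.isLt
    have hs := hσ v
    have hb : σ v + (n - d) < 3 * n := by split_ifs at hs <;> omega
    rcases cmod_resolve3 hn hb with ⟨h, h'⟩ | ⟨h, h', h''⟩ | ⟨h, h'⟩ <;>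
      rw [h] <;> split_ifs at hs <;> omega
  rw [Finset.filter_congr (fun v _ => hiff v),
    card_fin_filter n (fun j => d - p ≤ j ∧ j < d)]
  have hset : (Finset.range n).filter (fun j => d - p ≤ j ∧ j < d)
      = Finset.Ico (d - p) d := by
    ext j
    simp only [Finset.mem_filter, Finset.mem_range, Finset.mem_Ico]
    omega
  rw [hset, Nat.card_Ico]
  omega

lemma cM_le (hp : 1 ≤ p) (hpq : p < q) (hqn : q ≤ n) (t : ℕ) : cM n p q t ≤ n := by
  cases t with
  | zero => simp only [cM]; omega
  | succ s => simp only [cM, cR]; split_ifs <;> omega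

lemma key_count (hn : 0 < n) (hp : 1 ≤ p) (hpq : p < q) (hqn : q ≤ n)
    (hhalf : 2 * p ≤ q) {σ : Fin n → ℕ}
    (hσ : ∀ v : Fin n,
      σ v = if (v : ℕ) + 1 ≤ q - 1 - p then (v : ℕ) + 1 + p - 1
            else if (v : ℕ) + 1 ≤ q - 1 then (v : ℕ) + 1 + n + p - q - 1
            else n + p - 1) (t : ℕ) :
    chipR n (cRep n σ (cM n p q t) (cB n p q t)) = cR n p q t := by
  have hq : 0 < q := by omega
  rw [chipR_rep hn σ _ _ (cM_le hp hpq hqn t)]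
  have hbd : (cB n p q t + cDV p q t) % n = 0 := cB_dv_mod hq hpq hqn t
  have hdq : cDV p q t < q := cDV_lt p hq t
  have hmodeq : ∀ v : Fin n,
      (σ v + cB n p q t) % n = (σ v + (n - cDV p q t)) % n := by
    intro v
    have h0 : (σ v + (n - cDV p q t) + (cB n p q t + cDV p q t)) % n
        = (σ v + (n - cDV p q t)) % n := by
      rw [← Nat.add_mod_mod, hbd, Nat.add_zero]
    have h1 : σ v + (n - cDV p q t) + (cB n p q t + cDV p q t)
        = σ v + cB n p q t + n := by omega
    rw [h1, Nat.add_mod_right] at h0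
    exact h0
  rw [Finset.filter_congr (fun v _ => by rw [hmodeq v])]
  rcases lt_or_ge (cDV p q t) p with hbig | hsmall
  · have hm : cM n p q t = p := by
      cases t with
      | zero => rfl
      | succ s =>
        simp only [cM, cR]
        rw [if_neg ?_]
        intro hc
        rw [cDV_step_big hq hpq hc] at hbig
        omega
    rw [hm]
    have hr : cR n p q t = p + (n - q) := if_pos hbig
    rw [hr]
    exact count_big hn hp hpq hqn hhalf hσ hbig
  · have hr : cR n p q t = p := if_neg (by omega)
    rw [hr]
    cases t with
    | zero => rw [cDV_zero] at hsmall; omega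
    | succ s =>
      rcases lt_or_ge (cDV p q s) p with hb' | hs'
      · have hm : cM n p q (s + 1) = p + (n - q) := if_pos hb'
        have hd := cDV_step_big hq hpq hb'
        rw [hm]
        exact count_small_B hn hp hpq hqn hhalf hσ (by omega)
          (cDV_lt p hq (s + 1))
      · have hm : cM n p q (s + 1) = p := if_neg (by omega)
        have hd := cDV_step_small hq hs'
        have hds : cDV p q s < q := cDV_lt p hq s
        rw [hm]
        exact count_small_A hn hp hpq hqn hhalf hσ hsmall (by omega)

lemma orbit (hn : 0 < n) (hp : 1 ≤ p) (hpq : p < q) (hqn : q ≤ n)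
    (hhalf : 2 * p ≤ q) {σ : Fin n → ℕ}
    (hσ : ∀ v : Fin n,
      σ v = if (v : ℕ) + 1 ≤ q - 1 - p then (v : ℕ) + 1 + p - 1
            else if (v : ℕ) + 1 ≤ q - 1 then (v : ℕ) + 1 + n + p - q - 1
            else n + p - 1) (t : ℕ) :
    (chipU n)^[t] σ = cRep n σ (cM n p q t) (cB n p q t) := by
  induction t with
  | zero =>
    funext v
    have hs := hσ v
    have hv := v.isLt
    simp only [Function.iterate_zero, id_eq, cRep, cM, cB, Finset.range_zero,
      Finset.sum_empty, Nat.add_zero]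
    have hb : σ v + (n - p) < 2 * n := by split_ifs at hs <;> omega
    rcases cmod_resolve2 hn hb with ⟨h, h'⟩ | ⟨h, h'⟩ <;> rw [h] <;>
      split_ifs at hs <;> omega
  | succ t ih =>
    rw [Function.iterate_succ_apply', ih, chipU_rep hn σ _ _ (cM_le hp hpq hqn t),
      key_count hn hp hpq hqn hhalf hσ t]
    have h1 : cM n p q (t + 1) = cR n p q t := rfl
    rw [h1, cB_succ]

lemma alpha_eq_cB (hn : 0 < n) (hp : 1 ≤ p) (hpq : p < q) (hqn : q ≤ n)
    (hhalf : 2 * p ≤ q) {σ : Fin n → ℕ}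
    (hσ : ∀ v : Fin n,
      σ v = if (v : ℕ) + 1 ≤ q - 1 - p then (v : ℕ) + 1 + p - 1
            else if (v : ℕ) + 1 ≤ q - 1 then (v : ℕ) + 1 + n + p - q - 1
            else n + p - 1) (t : ℕ) :
    chipAlpha n σ t = cB n p q t := by
  unfold chipAlpha cB
  refine Finset.sum_congr rfl fun s _ => ?_
  rw [orbit hn hp hpq hqn hhalf hσ s, key_count hn hp hpq hqn hhalf hσ s]

lemma card_dv (hq : 0 < q) (hcop : Nat.Coprime p q) (hpq : p < q) :
    ((Finset.range q).filter (fun s => cDV p q s < p)).card = p := by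
  have hinj : Set.InjOn (fun s => cDV p q s) (Finset.range q) := by
    intro a ha b hb hab
    simp only [Finset.coe_range, Set.mem_Iio] at ha hb
    simp only at hab
    have h1 := cDV_mod p hq a
    have h2 := cDV_mod p hq b
    rw [hab] at h1
    have h3 : p * a ≡ p * b [MOD q] :=
      Nat.ModEq.add_right_cancel' (cDV p q b) (by unfold Nat.ModEq; rw [h1, h2])
    have h4 : a ≡ b [MOD q] := h3.cancel_left_of_coprime hcop.symm
    unfold Nat.ModEq at h4
    rwa [Nat.mod_eq_of_lt ha, Nat.mod_eq_of_lt hb] at h4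
  have himg : (Finset.range q).image (fun s => cDV p q s) = Finset.range q := by
    apply Finset.eq_of_subset_of_card_le
    · intro x hx
      simp only [Finset.mem_image] at hx
      obtain ⟨s, _, rfl⟩ := hx
      exact Finset.mem_range.2 (cDV_lt p hq s)
    · rw [Finset.card_image_of_injOn hinj]
  have h5 : ((Finset.range q).filter (fun s => cDV p q s < p)).card
      = (((Finset.range q).filter (fun s => cDV p q s < p)).image
          (fun s => cDV p q s)).card :=
    (Finset.card_image_of_injOn (hinj.mono (by
      intro x hx
      simp only [Finset.coe_filter, Set.mem_setOf_eq, Finset.coe_range, Set.mem_Iio] at hx ⊢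
      exact (Finset.mem_range.1 hx.1 : _)))).symm
  rw [h5]
  have h7 : Finset.image (fun s => cDV p q s)
      ((Finset.range q).filter (fun s => cDV p q s < p))
      = (Finset.range q).filter (fun x => x < p) := by
    ext x
    simp only [Finset.mem_image, Finset.mem_filter, Finset.mem_range]
    constructor
    · rintro ⟨s, ⟨hs, hlt⟩, rfl⟩
      exact ⟨cDV_lt p hq s, hlt⟩
    · rintro ⟨hxq, hxp⟩
      have : x ∈ Finset.image (fun s => cDV p q s) (Finset.range q) := by
        rw [himg]; exact Finset.mem_range.2 hxq
      simp only [Finset.mem_image, Finset.mem_range] at this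
      obtain ⟨s, hs, rfl⟩ := this
      exact ⟨s, ⟨hs, hxp⟩, rfl⟩
  have h6 : (Finset.range q).filter (fun x => x < p) = Finset.range p := by
    ext j
    simp only [Finset.mem_filter, Finset.mem_range]
    omega
  rw [h7, h6, Finset.card_range]

lemma cB_q_eq (hp : 1 ≤ p) (hpq : p < q) (hqn : q ≤ n) (hcop : Nat.Coprime p q) :
    cB n p q q = n * p := by
  have hq : 0 < q := by omega
  unfold cB
  have h1 : ∀ s ∈ Finset.range q, cR n p q s
      = p + (if cDV p q s < p then n - q else 0) := by
    intro s _
    unfold cR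
    split_ifs <;> omega
  rw [Finset.sum_congr rfl h1, Finset.sum_add_distrib, Finset.sum_const,
    Finset.card_range, ← Finset.sum_filter, Finset.sum_const,
    card_dv hq hcop hpq, smul_eq_mul, smul_eq_mul]
  have : q * p + p * (n - q) = n * p := by
    zify [hqn]
    ring
  omega

lemma cB_period (hp : 1 ≤ p) (hpq : p < q) (hqn : q ≤ n) (hcop : Nat.Coprime p q)
    (t : ℕ) : cB n p q (t + q) = cB n p q t + n * p := by
  induction t with
  | zero => rw [Nat.zero_add, cB_q_eq hp hpq hqn hcop]; simp [cB]
  | succ t ih =>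
    have e : t + 1 + q = (t + q) + 1 := by omega
    rw [e, cB_succ, ih, cR_periodic, cB_succ]
    omega

lemma cB_decompose (hp : 1 ≤ p) (hpq : p < q) (hqn : q ≤ n) (hcop : Nat.Coprime p q)
    (j : ℕ) : ∀ k : ℕ, cB n p q (j + k * q) = cB n p q j + k * (n * p) := by
  intro k
  induction k with
  | zero => simp
  | succ k ih =>
    have e : j + (k + 1) * q = (j + k * q) + q := by ring
    rw [e, cB_period hp hpq hqn hcop, ih]
    ring

lemma cB_le (hj : j ≤ q) : cB n p q j ≤ cB n p q q := by
  unfold cB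
  exact Finset.sum_le_sum_of_subset (Finset.range_subset_range.2 hj)

end Aux

theorem explicit_configuration_activity (n p q : ℕ) (hn : 0 < n)
    (hp : 1 ≤ p) (hpq : p < q) (hqn : q ≤ n) (hcop : Nat.Coprime p q)
    (hhalf : 2 * p ≤ q) (σ : Fin n → ℕ)
    (hσ : ∀ v : Fin n,
      σ v = if (v : ℕ) + 1 ≤ q - 1 - p then (v : ℕ) + 1 + p - 1
            else if (v : ℕ) + 1 ≤ q - 1 then (v : ℕ) + 1 + n + p - q - 1
            else n + p - 1) :
    Activity n σ ((p : ℝ) / (q : ℝ)) := by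
  have hq : 0 < q := by omega
  unfold Activity
  have heq : (fun t : ℕ => (chipAlpha n σ t : ℝ) / (n * t))
      = fun t : ℕ => (cB n p q t : ℝ) / (n * t) :=
    funext fun t => by rw [alpha_eq_cB hn hp hpq hqn hhalf hσ t]
  rw [heq, tendsto_iff_dist_tendsto_zero]
  apply squeeze_zero' (g := fun t : ℕ => (2 * p : ℝ) / t)
  · exact Filter.Eventually.of_forall fun t => dist_nonneg
  · filter_upwards [Filter.eventually_ge_atTop 1] with t ht
    set j := t % q with hj
    set k := t / q with hk
    have htj : t = j + k * q := by
      rw [hj, hk, Nat.mod_add_div']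
    have hjq : j < q := Nat.mod_lt _ hq
    have hcb : cB n p q t = cB n p q j + k * (n * p) := by
      conv_lhs => rw [htj]
      exact cB_decompose hp hpq hqn hcop j k
    have hble : cB n p q j ≤ n * p := by
      have h := cB_le (n := n) (p := p) (q := q) (le_of_lt hjq)
      rwa [cB_q_eq hp hpq hqn hcop] at h
    have hn0 : (n : ℝ) ≠ 0 := Nat.cast_ne_zero.2 (by omega)
    have hq0 : (q : ℝ) ≠ 0 := Nat.cast_ne_zero.2 (by omega)
    have ht1 : (1 : ℕ) ≤ t := ht
    have ht0 : (t : ℝ) ≠ 0 := Nat.cast_ne_zero.2 (by omega)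
    have htpos : (0 : ℝ) < t := by
      have : (0 : ℕ) < t := by omega
      exact_mod_cast this
    rw [Real.dist_eq]
    have htR : (t : ℝ) = j + k * q := by
      conv_lhs => rw [htj]
      push_cast
      ring
    have hjk0 : ((j : ℝ) + k * q) ≠ 0 := by rw [← htR]; exact ht0
    have e : (cB n p q t : ℝ) / (n * t) - p / q
        = ((q : ℝ) * (cB n p q j) - p * n * j) / (q * n * t) := by
      have hcbR : (cB n p q t : ℝ) = (cB n p q j : ℝ) + k * (n * p) := by
        rw [hcb]; push_cast; ring
      rw [hcbR, htR]
      field_simp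
      ring
    rw [e, abs_div]
    have hdpos : (0 : ℝ) < q * n * t := by positivity
    rw [abs_of_pos hdpos]
    have hcbj : (cB n p q j : ℝ) ≤ (n : ℝ) * p := by
      have h2 : ((cB n p q j : ℕ) : ℝ) ≤ ((n * p : ℕ) : ℝ) := Nat.cast_le.2 hble
      push_cast at h2
      linarith
    have hjR : (j : ℝ) ≤ q := by
      have : (j : ℝ) < q := by exact_mod_cast hjq
      linarith
    have hq0' : (0 : ℝ) ≤ q := Nat.cast_nonneg _
    have hn0' : (0 : ℝ) ≤ n := Nat.cast_nonneg _
    have hp0' : (0 : ℝ) ≤ p := Nat.cast_nonneg _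
    have hcb0 : (0 : ℝ) ≤ (cB n p q j : ℝ) := Nat.cast_nonneg _
    have hj0 : (0 : ℝ) ≤ j := Nat.cast_nonneg _
    have hnum : |(q : ℝ) * (cB n p q j) - p * n * j| ≤ 2 * (p * n * q) := by
      rw [abs_le]
      constructor <;> nlinarith
    calc |(q : ℝ) * (cB n p q j) - p * n * j| / (q * n * t)
        ≤ (2 * ((p : ℝ) * n * q)) / (q * n * t) := by gcongr
      _ = 2 * p / t := by field_simp
  · exact tendsto_const_div_atTop_nhds_zero_nat (𝕜 := ℝ) (2 * p)
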